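/- The only irreducible GL(ℤ)-polynomials whose complex roots generate a cyclic multiplicative subgroup of ℂ \ {0} are the (up-to-sign) cyclotomic polynomials and the quadratic GL(ℤ)-polynomials. -/

import Mathlib

open Polynomial

/-- A `GL(ℤ)`-polynomial of degree `d`: integer coefficients, leading coefficient
`(-1)^d`, and constant term `1` or `-1`. -/
def IsGLZPoly (P : Polynomial ℤ) (d : ℕ) : Prop :=
  P.natDegree = d ∧ P.leadingCoeff = (-1) ^ d ∧ (P.coeff 0 = 1 ∨ P.coeff 0 = -1)

/-- Combinatorial core: a finite nonempty set of nonzero integers closed under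
`b ↦ c * b / a` for all `a c` in the set has at most two elements. -/
lemma glz_aux_int (E : Finset ℤ) (hne : E.Nonempty) (h0 : ∀ e ∈ E, e ≠ 0)
    (hcl : ∀ a ∈ E, ∀ c ∈ E, ∀ b ∈ E, ∃ e ∈ E, e * a = c * b) :
    E.card ≤ 2 := by
  obtain ⟨m, hm, hmax⟩ := E.exists_max_image Int.natAbs hne
  obtain ⟨a, ha, hmin⟩ := E.exists_min_image Int.natAbs hne
  obtain ⟨e, he, hea⟩ := hcl a ha m hm m hm
  have h1 : e.natAbs * a.natAbs = m.natAbs * m.natAbs := by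
    rw [← Int.natAbs_mul, ← Int.natAbs_mul, hea]
  have hm0 : 0 < m.natAbs := Int.natAbs_pos.mpr (h0 m hm)
  have hma : m.natAbs ≤ a.natAbs := by
    have h2 : m.natAbs * m.natAbs ≤ m.natAbs * a.natAbs := by
      calc m.natAbs * m.natAbs = e.natAbs * a.natAbs := h1.symm
        _ ≤ m.natAbs * a.natAbs := Nat.mul_le_mul_right _ (hmax e he)
    exact Nat.le_of_mul_le_mul_left h2 hm0
  have hall : ∀ x ∈ E, x.natAbs = a.natAbs := fun x hx =>
    le_antisymm ((hmax x hx).trans hma) (hmin x hx)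
  have hsub : E ⊆ ({a, -a} : Finset ℤ) := by
    intro x hx
    rcases Int.natAbs_eq_natAbs_iff.mp (hall x hx) with h | h <;>
      simp [Finset.mem_insert, h]
  calc E.card ≤ ({a, -a} : Finset ℤ).card := Finset.card_le_card hsub
    _ ≤ 2 := (Finset.card_insert_le _ _).trans (by simp)

/-- The only irreducible `GL(ℤ)`-polynomials whose complex roots generate a cyclic
multiplicative subgroup of `ℂ \ {0}` are the cyclotomic ones (all roots are roots of
unity) and the quadratic ones. -/
theorem cyclic_root_group_glzPoly (d : ℕ) (hd : 1 ≤ d)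
    (P : Polynomial ℤ) (hP : IsGLZPoly P d) (hirr : Irreducible P)
    (hcyc : IsCyclic
      ↥(Subgroup.closure {z : ℂˣ | (P.map (Int.castRingHom ℂ)).IsRoot (z : ℂ)})) :
    (∀ z : ℂ, (P.map (Int.castRingHom ℂ)).IsRoot z → ∃ n : ℕ, 0 < n ∧ z ^ n = 1) ∨
      d = 2 := by
  classical
  obtain ⟨hdeg, hlead, hconst⟩ := hP
  set Pc : ℂ[X] := P.map (Int.castRingHom ℂ) with hPcdef
  have hu1 : ((-1 : ℤ) ^ d) ≠ 0 := pow_ne_zero _ (by norm_num)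
  have hPne : P ≠ 0 := by
    intro h
    rw [h, leadingCoeff_zero] at hlead
    exact hu1 hlead.symm
  have hPcne : Pc ≠ 0 := (Polynomial.map_ne_zero_iff Int.cast_injective).mpr hPne
  -- the monic associate of `P`
  set Qz : ℤ[X] := C ((-1 : ℤ) ^ d) * P with hQzdef
  have huC : IsUnit (C ((-1 : ℤ) ^ d) : ℤ[X]) :=
    Polynomial.isUnit_C.mpr ((isUnit_one.neg).pow d)
  have hQmonic : Qz.Monic := by
    unfold Polynomial.Monic
    rw [hQzdef, leadingCoeff_mul, leadingCoeff_C, hlead, ← mul_pow]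
    norm_num
  have hQirr : Irreducible Qz := by
    have hassoc : Associated P Qz := by
      refine ⟨huC.unit, ?_⟩
      rw [IsUnit.unit_spec, hQzdef, mul_comm]
    exact hassoc.irreducible hirr
  -- over ℚ
  set Qq : ℚ[X] := Qz.map (Int.castRingHom ℚ) with hQqdef
  have hQqmonic : Qq.Monic := hQmonic.map _
  have hQqne : Qq ≠ 0 := hQqmonic.ne_zero
  have hQqirr : Irreducible Qq :=
    (IsPrimitive.Int.irreducible_iff_irreducible_map_cast hQmonic.isPrimitive).mp hQirr
  have hQqdeg : Qq.natDegree = d := by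
    rw [hQqdef, hQmonic.natDegree_map, hQzdef, natDegree_C_mul hu1, hdeg]
  -- the image of Qq in ℂ
  have hQc : Qq.map (algebraMap ℚ ℂ) = C ((-1 : ℂ) ^ d) * Pc := by
    rw [hQqdef, map_map,
      show (algebraMap ℚ ℂ).comp (Int.castRingHom ℚ) = Int.castRingHom ℂ from
        RingHom.ext_int _ _,
      hQzdef, Polynomial.map_mul, map_C]
    norm_num
    rfl
  have huC2 : ((-1 : ℂ) ^ d) ≠ 0 := pow_ne_zero _ (by norm_num)
  have hroot_iff : ∀ z : ℂ, Pc.IsRoot z ↔ aeval z Qq = 0 := by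
    intro z
    rw [aeval_def, ← eval_map, hQc, eval_mul, eval_C]
    constructor
    · intro h; rw [h, mul_zero]
    · intro h
      rcases mul_eq_zero.mp h with h | h
      · exact absurd h huC2
      · exact h
  have h0root : ¬ Pc.IsRoot 0 := by
    intro h
    have h2 : Pc.coeff 0 = 0 := by rwa [coeff_zero_eq_eval_zero]
    rw [hPcdef, coeff_map] at h2
    rcases hconst with h3 | h3 <;> rw [h3] at h2 <;> norm_num at h2
  -- once one root is a root of unity, all are
  have lemA : (∃ z : ℂ, Pc.IsRoot z ∧ ∃ n : ℕ, 0 < n ∧ z ^ n = 1) →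
      ∀ w : ℂ, Pc.IsRoot w → ∃ n : ℕ, 0 < n ∧ w ^ n = 1 := by
    rintro ⟨z, hz, n, hn, hzn⟩ w hw
    have hmz : minpoly ℚ z = Qq :=
      (minpoly.eq_of_irreducible_of_monic hQqirr ((hroot_iff z).mp hz) hQqmonic).symm
    have hdvd : Qq ∣ (X ^ n - 1 : ℚ[X]) :=
      hmz ▸ minpoly.dvd ℚ z (by simp [sub_eq_zero, hzn])
    obtain ⟨q, hq⟩ := hdvd
    refine ⟨n, hn, ?_⟩
    have h1 := (hroot_iff w).mp hw
    have h2 : aeval w (X ^ n - 1 : ℚ[X]) = 0 := by rw [hq, map_mul, h1, zero_mul]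
    simpa [sub_eq_zero] using h2
  by_cases hA : ∃ z : ℂ, Pc.IsRoot z ∧ ∃ n : ℕ, 0 < n ∧ z ^ n = 1
  · exact Or.inl (lemA hA)
  -- now no root is a root of unity
  haveI := hcyc
  obtain ⟨g, hg⟩ := IsCyclic.exists_generator
    (α := ↥(Subgroup.closure {z : ℂˣ | Pc.IsRoot (z : ℂ)}))
  -- exponents of the roots w.r.t. the generator
  have hk : ∀ z : ℂ, ∃ k : ℤ, Pc.IsRoot z → z = (((g : ℂˣ) : ℂ)) ^ k := by
    intro z
    by_cases hz : Pc.IsRoot z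
    · have hz0 : z ≠ 0 := fun h => h0root (h ▸ hz)
      have hmem : Units.mk0 z hz0 ∈ {u : ℂˣ | Pc.IsRoot (u : ℂ)} := hz
      have hmem2 : Units.mk0 z hz0 ∈
          Subgroup.closure {u : ℂˣ | Pc.IsRoot (u : ℂ)} := Subgroup.subset_closure hmem
      obtain ⟨k, hk⟩ := Subgroup.mem_zpowers_iff.mp (hg ⟨_, hmem2⟩)
      refine ⟨k, fun _ => ?_⟩
      have h1 : ((g ^ k : _) : ℂˣ) = Units.mk0 z hz0 := congrArg Subtype.val hk
      rw [SubgroupClass.coe_zpow] at h1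
      have h2 := congrArg Units.val h1
      rw [Units.val_zpow_eq_zpow_val] at h2
      exact h2.symm
    · exact ⟨0, fun h => absurd h hz⟩
  choose kf hkf using hk
  set t : ℝ := ‖((g : ℂˣ) : ℂ)‖ with htdef
  have ht0 : 0 < t := norm_pos_iff.mpr (Units.ne_zero _)
  have hnorm : ∀ z : ℂ, Pc.IsRoot z → ‖z‖ = t ^ (kf z) := by
    intro z hz
    set k := kf z with hkdef
    rw [hkf z hz, norm_zpow, ← hkdef]
  -- the splitting field
  haveI : NumberField Qq.SplittingField :=
    { to_charZero := inferInstance, to_finiteDimensional := inferInstance }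
  set L := Qq.SplittingField with hLdef
  have hcomp : ∀ φ : L →+* ℂ, φ.comp (algebraMap ℚ L) = algebraMap ℚ ℂ :=
    fun φ => RingHom.ext_rat _ _
  have hLroot : ∀ (φ : L →+* ℂ) (x : L), aeval x Qq = 0 → Pc.IsRoot (φ x) := by
    intro φ x hx
    rw [hroot_iff]
    have h1 := hom_eval₂ Qq (algebraMap ℚ L) φ x
    rw [hcomp] at h1
    rw [aeval_def, ← h1, ← aeval_def, hx, map_zero]
  have hint : ∀ x : L, aeval x Qq = 0 → IsIntegral ℤ x := by
    intro x hx
    refine ⟨Qz, hQmonic, ?_⟩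
    have h1 : (algebraMap ℤ L) = (algebraMap ℚ L).comp (Int.castRingHom ℚ) :=
      RingHom.ext_int _ _
    rw [h1, ← Polynomial.eval₂_map, ← hQqdef, ← aeval_def, hx]
  have hLsplits : (Qq.map (algebraMap ℚ L)).Splits := SplittingField.splits Qq
  have hmemL_iff : ∀ x : L,
      x ∈ (Qq.map (algebraMap ℚ L)).roots ↔ aeval x Qq = 0 := by
    intro x
    rw [mem_roots ((Polynomial.map_ne_zero_iff (algebraMap ℚ L).injective).mpr hQqne),
      IsRoot, eval_map, ← aeval_def]
  have hLcard : (Qq.map (algebraMap ℚ L)).roots.card = d :=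
    hLsplits.natDegree_eq_card_roots.symm.trans ((natDegree_map _).trans hQqdeg)
  obtain ⟨x0, hx0mem⟩ := Multiset.card_pos_iff_exists_mem.mp (by rw [hLcard]; omega)
  have hx0 : aeval x0 Qq = 0 := (hmemL_iff x0).mp hx0mem
  set ιr : L →+* ℂ := (IsAlgClosed.lift : L →ₐ[ℚ] ℂ).toRingHom with hιdef
  by_cases ht1 : t = 1
  · -- Kronecker: all conjugates have norm one, contradiction with `hA`
    exfalso
    apply hA
    obtain ⟨n, hn, hxn⟩ :=
      NumberField.Embeddings.pow_eq_one_of_norm_eq_one L ℂ (hint x0 hx0)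
        (fun φ => by rw [hnorm _ (hLroot φ x0 hx0), ht1, one_zpow])
    exact ⟨ιr x0, hLroot ιr x0 hx0, n, hn, by rw [← map_pow, hxn, map_one]⟩
  -- main case: show d = 2
  right
  have hinj : ∀ m n : ℤ, t ^ m = t ^ n → m = n := by
    intro m n h
    have hlt : Real.log t ≠ 0 := by
      intro h0
      rcases Real.log_eq_zero.mp h0 with h | h | h
      · exact absurd h (ne_of_gt ht0)
      · exact ht1 h
      · rw [h] at ht0; norm_num at ht0
    have hl := congrArg Real.log h
    rw [Real.log_zpow, Real.log_zpow] at hl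
    exact_mod_cast mul_right_cancel₀ hlt hl
  have htrans : ∀ x y : L, aeval x Qq = 0 → aeval y Qq = 0 →
      ∃ σ : L ≃ₐ[ℚ] L, σ x = y := by
    intro x y hx hy
    have h1 : minpoly ℚ x = Qq := (minpoly.eq_of_irreducible_of_monic hQqirr hx hQqmonic).symm
    have h2 : minpoly ℚ y = Qq := (minpoly.eq_of_irreducible_of_monic hQqirr hy hQqmonic).symm
    obtain ⟨σ, hσ⟩ := (Normal.minpoly_eq_iff_mem_orbit (F := ℚ) (h := SplittingField.instNormal Qq) L).mp (h2.trans h1.symm)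
    exact ⟨σ, hσ⟩
  -- every complex root lifts to the splitting field
  have hsurj : ∀ z : ℂ, Pc.IsRoot z → ∃ x : L, aeval x Qq = 0 ∧ ιr x = z := by
    intro z hz
    have hQLmap : (Qq.map (algebraMap ℚ L)).map ιr = Qq.map (algebraMap ℚ ℂ) := by
      rw [map_map, hcomp]
    have hsplitsL : (Qq.map (algebraMap ℚ L)).Splits :=
      hLsplits
    have hmem : z ∈ (Qq.map (algebraMap ℚ ℂ)).roots := by
      rw [mem_roots ((Polynomial.map_ne_zero_iff (algebraMap ℚ ℂ).injective).mpr hQqne),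
        IsRoot, eval_map, ← aeval_def]
      exact (hroot_iff z).mp hz
    rw [← hQLmap, hsplitsL.roots_map_of_injective ιr.injective, Multiset.mem_map] at hmem
    obtain ⟨x, hxmem, hxz⟩ := hmem
    exact ⟨x, (hmemL_iff x).mp hxmem, hxz⟩
  -- the key multiplicative relation among exponents
  have hrel : ∀ a b c : ℂ, Pc.IsRoot a → Pc.IsRoot b → Pc.IsRoot c →
      ∃ w : ℂ, Pc.IsRoot w ∧ kf w * kf a = kf c * kf b := by
    intro a b c ha hb hc
    obtain ⟨xa, hxa, hxa2⟩ := hsurj a ha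
    obtain ⟨xb, hxb, hxb2⟩ := hsurj b hb
    obtain ⟨xc, hxc, hxc2⟩ := hsurj c hc
    obtain ⟨σ, hσ⟩ := htrans xa xc hxa hxc
    set φ : L →+* ℂ := ιr.comp σ.toAlgHom.toRingHom with hφdef
    have hφa : φ xa = c := by
      rw [hφdef, RingHom.comp_apply]
      show ιr (σ xa) = c
      rw [hσ, hxc2]
    set w : ℂ := φ xb with hwdef
    have hw : Pc.IsRoot w := hLroot φ xb hxb
    refine ⟨w, hw, ?_⟩
    obtain ⟨ka, hka⟩ : ∃ k : ℤ, kf a = k := ⟨_, rfl⟩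
    obtain ⟨kb, hkb⟩ : ∃ k : ℤ, kf b = k := ⟨_, rfl⟩
    have hpa : a = ((g : ℂˣ) : ℂ) ^ ka := hka ▸ hkf a ha
    have hpb : b = ((g : ℂˣ) : ℂ) ^ kb := hkb ▸ hkf b hb
    have hrelL : xa ^ kb = xb ^ ka := by
      apply ιr.injective
      rw [map_zpow₀, map_zpow₀, hxa2, hxb2, hpa, hpb,
        ← zpow_mul, ← zpow_mul, mul_comm]
    have h1 := congrArg φ hrelL
    rw [map_zpow₀, map_zpow₀, hφa] at h1
    have h2 := congrArg Norm.norm h1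
    rw [norm_zpow, norm_zpow, hnorm c hc, hnorm w hw, ← zpow_mul, ← zpow_mul] at h2
    rw [hka, hkb]
    exact (hinj _ _ h2).symm
  -- now the finite set of exponents
  have hsep : (Qq.map (algebraMap ℚ ℂ)).Separable := hQqirr.separable.map
  have hrootsPc : Pc.roots = (Qq.map (algebraMap ℚ ℂ)).roots := by
    rw [hQc, roots_C_mul _ huC2]
  have hnodup : Pc.roots.Nodup := by
    rw [hrootsPc]; exact nodup_roots hsep
  set R : Finset ℂ := Pc.roots.toFinset with hRdef
  have hmemR : ∀ z : ℂ, z ∈ R ↔ Pc.IsRoot z := by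
    intro z
    rw [hRdef, Multiset.mem_toFinset, mem_roots hPcne]
  have hRcard : R.card = d := by
    rw [hRdef, Multiset.toFinset_card_of_nodup hnodup, hrootsPc,
      ← (IsAlgClosed.splits (Qq.map (algebraMap ℚ ℂ))).natDegree_eq_card_roots, natDegree_map, hQqdeg]
  set E : Finset ℤ := R.image kf with hEdef
  have hinjOn : Set.InjOn kf R := by
    intro z hz w hw h
    rw [Finset.mem_coe, hmemR] at hz hw
    rw [hkf z hz, hkf w hw, h]
  have hEcard : E.card = d := by rw [hEdef, Finset.card_image_of_injOn hinjOn, hRcard]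
  have hEne : E.Nonempty := by
    rw [← Finset.card_pos, hEcard]; omega
  have h0E : ∀ e ∈ E, e ≠ 0 := by
    intro e he he0
    obtain ⟨z, hz, rfl⟩ := Finset.mem_image.mp he
    rw [hmemR] at hz
    apply hA
    refine ⟨z, hz, 1, one_pos, ?_⟩
    rw [pow_one, hkf z hz, he0, zpow_zero]
  have hclE : ∀ a ∈ E, ∀ c ∈ E, ∀ b ∈ E, ∃ e ∈ E, e * a = c * b := by
    intro a' ha' c' hc' b' hb'
    obtain ⟨za, hza, rfl⟩ := Finset.mem_image.mp ha'
    obtain ⟨zc, hzc, rfl⟩ := Finset.mem_image.mp hc'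
    obtain ⟨zb, hzb, rfl⟩ := Finset.mem_image.mp hb'
    rw [hmemR] at hza hzc hzb
    obtain ⟨w, hw, hwrel⟩ := hrel za zb zc hza hzb hzc
    exact ⟨kf w, Finset.mem_image.mpr ⟨w, (hmemR w).mpr hw, rfl⟩, hwrel⟩
  have hd2 : d ≤ 2 := hEcard ▸ glz_aux_int E hEne h0E hclE
  -- exclude d = 1
  have hd1 : d ≠ 1 := by
    intro hd1
    apply hA
    obtain ⟨z, hz⟩ := hEne
    obtain ⟨z, hzR, rfl⟩ := Finset.mem_image.mp hz
    rw [hmemR] at hzR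
    have haev : aeval z Qq = 0 := (hroot_iff z).mp hzR
    have hdeg1 : Qq.natDegree = 1 := by rw [hQqdeg, hd1]
    have hQq1 : Qq = X + C (Qq.coeff 0) := by
      have h1 := eq_X_add_C_of_natDegree_le_one (p := Qq) (by rw [hdeg1])
      have h2 : Qq.coeff 1 = 1 := by
        have := hQqmonic
        rwa [Polynomial.Monic, Polynomial.leadingCoeff, hdeg1] at this
      rwa [h2, map_one, one_mul] at h1
    have hc0 : Qq.coeff 0 = 1 ∨ Qq.coeff 0 = -1 := by
      have h1 : Qq.coeff 0 = ((Qz.coeff 0 : ℤ) : ℚ) := by rw [hQqdef, coeff_map]; rfl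
      have h2 : Qz.coeff 0 = (-1 : ℤ) ^ d * P.coeff 0 := by rw [hQzdef, coeff_C_mul]
      rcases hconst with h3 | h3 <;> rw [h1, h2, h3, hd1] <;> norm_num
    have hz1 : z = -((algebraMap ℚ ℂ) (Qq.coeff 0)) := by
      rw [hQq1] at haev
      simp only [map_add, aeval_X, aeval_C] at haev
      linear_combination haev
    refine ⟨z, hzR, 2, two_pos, ?_⟩
    rcases hc0 with h | h <;> rw [hz1, h] <;> norm_num [map_one, map_neg]
  omega
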